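/- arXiv:1910.09992 — 3 statements merged into one kernel-verified Lean document; each statement's English description precedes it below -/
import Mathlib

section
/- For an odd prime p with gcd(p, 2Δ) = 1, where Δ is a squarefree product of an even number of primes, there exists a prime q with q ≡ 1 (mod 4), q a quadratic residue mod p, and such that the Hilbert symbol (q, -Δ)_ℓ = -1 if and only if ℓ divides Δ. (Existence of the auxiliary prime in the Hashimoto model construction.) -/
open Polynomial

lemma toZMod_eq_zero_iff_dvd' (ℓ : ℕ) [Fact ℓ.Prime] (x : ℤ_[ℓ]) :
    PadicInt.toZMod x = 0 ↔ (ℓ : ℤ_[ℓ]) ∣ x := by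
  rw [← RingHom.mem_ker, PadicInt.ker_toZMod, PadicInt.maximalIdeal_eq_span_p,
    Ideal.mem_span_singleton]

lemma norm_eq_one_of_toZMod_ne_zero (ℓ : ℕ) [Fact ℓ.Prime] (x : ℤ_[ℓ])
    (h : PadicInt.toZMod x ≠ 0) : ‖x‖ = 1 := by
  rcases lt_or_eq_of_le (PadicInt.norm_le_one x) with hlt | he
  · rw [PadicInt.norm_lt_one_iff_dvd, ← toZMod_eq_zero_iff_dvd'] at hlt
    exact absurd hlt h
  · exact he

/-- Hensel: an odd-prime p-adic integer unit whose reduction is a nonzero square is a square. -/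
lemma isSquare_padic_of_odd (ℓ : ℕ) [Fact ℓ.Prime] (hℓ : ℓ ≠ 2) (u : ℤ_[ℓ])
    (hsq : IsSquare (PadicInt.toZMod u)) (h0 : PadicInt.toZMod u ≠ 0) :
    ∃ w : ℤ_[ℓ], w ^ 2 = u := by
  obtain ⟨c, hc⟩ := hsq
  have hc0 : c ≠ 0 := by rintro rfl; simp at hc; exact h0 hc
  set a : ℤ_[ℓ] := (c.val : ℤ_[ℓ]) with ha
  have hta : PadicInt.toZMod a = c := by simp [ha]
  set F : Polynomial ℤ_[ℓ] := X ^ 2 - C u with hF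
  have hFa : F.eval a = a ^ 2 - u := by simp [hF]
  have hFd : F.derivative.eval a = 2 * a := by
    simp [hF]; norm_num
  have hnormFa : ‖F.eval a‖ < 1 := by
    rw [PadicInt.norm_lt_one_iff_dvd, ← toZMod_eq_zero_iff_dvd', hFa, map_sub, map_pow, hta,
      hc, sq, sub_self]
  have h2 : (2 : ZMod ℓ) ≠ 0 := by
    intro h
    have h2' : ((2 : ℕ) : ZMod ℓ) = 0 := by exact_mod_cast h
    have := (ZMod.natCast_eq_zero_iff 2 ℓ).mp h2'
    rcases (Nat.prime_dvd_prime_iff_eq (Fact.out) Nat.prime_two).mp this with h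
    exact hℓ h
  have hder : ‖F.derivative.eval a‖ = 1 := by
    rw [hFd]
    apply norm_eq_one_of_toZMod_ne_zero
    rw [map_mul, hta]
    have h2c : (2 : ℤ_[ℓ]) = ((2 : ℕ) : ℤ_[ℓ]) := by norm_cast
    have : (PadicInt.toZMod (2 : ℤ_[ℓ])) = (2 : ZMod ℓ) := by
      rw [h2c, map_natCast]; norm_cast
    rw [this]
    exact mul_ne_zero h2 hc0
  have key : ‖F.eval a‖ < ‖F.derivative.eval a‖ ^ 2 := by
    rw [hder]; simpa using hnormFa
  obtain ⟨z, hz, -⟩ := hensels_lemma key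
  exact ⟨z, sub_eq_zero.mp (by simpa [hF] using hz)⟩

/-- Hensel at 2: a 2-adic integer congruent to 1 mod 8 is a square. -/
lemma isSquare_padic_two (u : ℤ_[2]) (h : ((2 : ℤ_[2]) ^ 3) ∣ (u - 1)) :
    ∃ w : ℤ_[2], w ^ 2 = u := by
  set F : Polynomial ℤ_[2] := X ^ 2 - C u with hF
  have hFa : F.eval 1 = 1 - u := by simp [hF]
  have hFd : F.derivative.eval 1 = 2 := by simp [hF]; norm_num
  have hnormFa : ‖F.eval 1‖ ≤ ((2 : ℝ) ^ (3 : ℕ))⁻¹ := by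
    rw [hFa]
    have : (2 : ℤ_[2]) ^ 3 ∣ (1 - u) := by
      obtain ⟨c, hc⟩ := h
      exact ⟨-c, by rw [← neg_sub, hc, mul_neg]⟩
    have := (PadicInt.norm_le_pow_iff_mem_span_pow (1 - u) 3).mpr
      (Ideal.mem_span_singleton.mpr this)
    rw [zpow_neg, zpow_natCast] at this
    exact_mod_cast this
  have hder : ‖F.derivative.eval 1‖ = 2⁻¹ := by
    rw [hFd]
    have : (2 : ℤ_[2]) = ((2 : ℕ) : ℤ_[2]) := by norm_cast
    rw [this]
    simpa using PadicInt.norm_p (p := 2)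
  have key : ‖F.eval 1‖ < ‖F.derivative.eval 1‖ ^ 2 := by
    rw [hder]
    calc ‖F.eval 1‖ ≤ ((2:ℝ)^(3:ℕ))⁻¹ := hnormFa
    _ < (2⁻¹)^2 := by norm_num
  obtain ⟨z, hz, -⟩ := hensels_lemma key
  exact ⟨z, sub_eq_zero.mp (by simpa [hF] using hz)⟩

lemma zmod_natCast_ne_zero (ℓ n : ℕ) [NeZero ℓ] (h : ¬ ℓ ∣ n) : ((n : ZMod ℓ)) ≠ 0 :=
  fun hh => h ((ZMod.natCast_eq_zero_iff n ℓ).mp hh)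

lemma exists_sol_generic (ℓ : ℕ) [Fact ℓ.Prime] (hℓ : ℓ ≠ 2) (q Δ : ℕ)
    (hq : ¬ ℓ ∣ q) (hΔ : ¬ ℓ ∣ Δ) :
    ∃ x y z : ℚ_[ℓ], (x, y, z) ≠ (0, 0, 0) ∧
      z ^ 2 = ((q : ℚ) : ℚ_[ℓ]) * x ^ 2 + ((-(Δ : ℚ)) : ℚ_[ℓ]) * y ^ 2 := by
  have hq0 : ((q : ZMod ℓ)) ≠ 0 := zmod_natCast_ne_zero ℓ q hq
  have hΔ0 : ((Δ : ZMod ℓ)) ≠ 0 := zmod_natCast_ne_zero ℓ Δ hΔ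
  have hcard : Fintype.card (ZMod ℓ) % 2 = 1 := by
    rw [ZMod.card]
    exact Nat.Prime.eq_two_or_odd (Fact.out) |>.resolve_left hℓ
  obtain ⟨a, b, hab⟩ := FiniteField.exists_root_sum_quadratic
    (f := Polynomial.C (q : ZMod ℓ) * Polynomial.X ^ 2 + Polynomial.C 0 * Polynomial.X
      + Polynomial.C (-1))
    (g := Polynomial.C (-(Δ : ZMod ℓ)) * Polynomial.X ^ 2 + Polynomial.C 0 * Polynomial.X
      + Polynomial.C 0)
    (Polynomial.degree_quadratic hq0) (Polynomial.degree_quadratic (neg_ne_zero.mpr hΔ0)) hcard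
  simp only [Polynomial.eval_add, Polynomial.eval_mul, Polynomial.eval_pow, Polynomial.eval_C,
    Polynomial.eval_X, zero_mul, add_zero, zero_add] at hab
  -- hab : q * a^2 + (-1) + (-Δ * b^2) = 0[?]
  have hab' : (q : ZMod ℓ) * a ^ 2 - (Δ : ZMod ℓ) * b ^ 2 = 1 := by linear_combination hab
  set A : ℤ_[ℓ] := (a.val : ℤ_[ℓ]) with hA
  set B : ℤ_[ℓ] := (b.val : ℤ_[ℓ]) with hB
  have htA : PadicInt.toZMod A = a := by simp [hA]
  have htB : PadicInt.toZMod B = b := by simp [hB]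
  set u : ℤ_[ℓ] := (q : ℤ_[ℓ]) * A ^ 2 - (Δ : ℤ_[ℓ]) * B ^ 2 with hu
  have htu : PadicInt.toZMod u = 1 := by
    rw [hu, map_sub, map_mul, map_mul, map_pow, map_pow, htA, htB, map_natCast, map_natCast]
    exact hab'
  obtain ⟨w, hw⟩ := isSquare_padic_of_odd ℓ hℓ u (by rw [htu]; exact IsSquare.one)
    (by rw [htu]; exact one_ne_zero)
  refine ⟨(A : ℚ_[ℓ]), (B : ℚ_[ℓ]), (w : ℚ_[ℓ]), ?_, ?_⟩
  · have hw0 : w ≠ 0 := by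
      rintro rfl
      rw [show ((0:ℤ_[ℓ])^2) = 0 by ring] at hw
      rw [← hw] at htu; simp at htu
    simp only [ne_eq, Prod.mk.injEq, not_and]
    intro _ _
    exact (PadicInt.coe_ne_zero (x := w)).mpr hw0
  · have := congrArg (fun t : ℤ_[ℓ] => (t : ℚ_[ℓ])) hw
    push_cast at this ⊢
    rw [hu] at this
    push_cast at this
    linear_combination this

lemma exists_sol_at_q (q Δ : ℕ) [Fact q.Prime] (hℓ : q ≠ 2) (hΔ : ¬ q ∣ Δ)
    (hsq : IsSquare (-(Δ : ZMod q))) :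
    ∃ x y z : ℚ_[q], (x, y, z) ≠ (0, 0, 0) ∧
      z ^ 2 = ((q : ℚ) : ℚ_[q]) * x ^ 2 + ((-(Δ : ℚ)) : ℚ_[q]) * y ^ 2 := by
  set u : ℤ_[q] := -(Δ : ℤ_[q]) with hu
  have htu : PadicInt.toZMod u = -(Δ : ZMod q) := by rw [hu, map_neg, map_natCast]
  have htu0 : PadicInt.toZMod u ≠ 0 := by
    rw [htu]; exact neg_ne_zero.mpr (zmod_natCast_ne_zero q Δ hΔ)
  obtain ⟨w, hw⟩ := isSquare_padic_of_odd q hℓ u (htu ▸ hsq) htu0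
  refine ⟨0, 1, (w : ℚ_[q]), ?_, ?_⟩
  · simp
  · have := congrArg (fun t : ℤ_[q] => (t : ℚ_[q])) hw
    push_cast at this ⊢
    rw [hu] at this
    push_cast at this
    linear_combination this

lemma exists_sol_at_two (q Δ : ℕ) (hq : q % 8 = 1) :
    ∃ x y z : ℚ_[2], (x, y, z) ≠ (0, 0, 0) ∧
      z ^ 2 = ((q : ℚ) : ℚ_[2]) * x ^ 2 + ((-(Δ : ℚ)) : ℚ_[2]) * y ^ 2 := by
  have hdvd : ((2 : ℤ_[2]) ^ 3) ∣ ((q : ℤ_[2]) - 1) := by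
    have h8 : (8 : ℕ) ∣ (q - 1) := by omega
    obtain ⟨c, hc⟩ := h8
    have hq1 : 1 ≤ q := by omega
    refine ⟨(c : ℤ_[2]), ?_⟩
    have : ((q : ℕ) : ℤ_[2]) = ((1 + 8 * c : ℕ) : ℤ_[2]) := by rw [show 1 + 8 * c = q by omega]
    push_cast at this
    rw [this]; ring
  obtain ⟨w, hw⟩ := isSquare_padic_two (q : ℤ_[2]) hdvd
  refine ⟨1, 0, (w : ℚ_[2]), ?_, ?_⟩
  · simp only [ne_eq, Prod.mk.injEq, not_and]
    intro h; exact absurd h one_ne_zero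
  · have := congrArg (fun t : ℤ_[2] => (t : ℚ_[2])) hw
    push_cast at this ⊢
    linear_combination this

lemma norm_ge_of_gt_one {p : ℕ} [Fact p.Prime] {Z : ℚ_[p]} (h : 1 < ‖Z‖) : (p : ℝ) ≤ ‖Z‖ := by
  have hZ0 : Z ≠ 0 := by rintro rfl; simp at h; linarith
  rw [Padic.norm_eq_zpow_neg_valuation hZ0] at h ⊢
  have hp1 : (1 : ℝ) < (p : ℝ) := by exact_mod_cast (Fact.out : p.Prime).one_lt
  rw [show (1:ℝ) = (p:ℝ) ^ (0:ℤ) by simp] at h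
  have := (zpow_lt_zpow_iff_right₀ hp1).mp h
  calc (p:ℝ) = (p:ℝ) ^ (1:ℤ) := by simp
  _ ≤ (p:ℝ) ^ (-Z.valuation) := by
      apply zpow_le_zpow_right₀ (le_of_lt hp1); omega

/-- if `t^2 = q` in `ℚ_[ℓ]` with `ℓ ∤ q`, then `q` has a square root in `ℤ_[ℓ]`. -/
lemma unit_sq_lift (ℓ q : ℕ) [Fact ℓ.Prime] (hq : ¬ ℓ ∣ q) (t : ℚ_[ℓ])
    (ht : t ^ 2 = (q : ℚ_[ℓ])) : ∃ T : ℤ_[ℓ], T ^ 2 = (q : ℤ_[ℓ]) := by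
  have hnq : ‖(q : ℚ_[ℓ])‖ = 1 := by
    have h1 : ‖((q : ℤ) : ℚ_[ℓ])‖ ≤ 1 := Padic.norm_int_le_one q
    have h2 : ¬ ‖((q : ℤ) : ℚ_[ℓ])‖ < 1 := by
      rw [Padic.norm_intCast_lt_one_iff]
      exact_mod_cast hq
    push_cast at h1 h2
    linarith
  have hnt : ‖t‖ ≤ 1 := by
    have : ‖t‖ ^ 2 = 1 := by rw [← norm_pow, ht, hnq]
    nlinarith [norm_nonneg t]
  refine ⟨⟨t, hnt⟩, ?_⟩
  apply Subtype.coe_injective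
  push_cast
  exact ht

lemma zmod_sq_aux (ℓ : ℕ) [Fact ℓ.Prime] (qq : ZMod ℓ) (hq : ¬ IsSquare qq) {w v : ZMod ℓ}
    (h : w ^ 2 = qq * v ^ 2) : w = 0 ∧ v = 0 := by
  have hv : v = 0 := by
    by_contra hv
    refine hq ⟨w * v⁻¹, ?_⟩
    have hvv : v * v⁻¹ = 1 := mul_inv_cancel₀ hv
    calc qq = qq * (v * v⁻¹) ^ 2 := by rw [hvv]; ring
    _ = w ^ 2 * (v⁻¹) ^ 2 := by rw [mul_pow]; rw [h]; ring
    _ = (w * v⁻¹) * (w * v⁻¹) := by ring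
  subst hv
  simpa [pow_eq_zero_iff] using h

lemma no_rep_odd_int (ℓ q Δ : ℕ) [Fact ℓ.Prime] (hq : ¬ IsSquare ((q : ZMod ℓ)))
    (hΔ1 : ℓ ∣ Δ) (hΔ2 : ¬ (ℓ * ℓ) ∣ Δ) (X₀ Z₀ : ℤ_[ℓ]) :
    Z₀ ^ 2 - (q : ℤ_[ℓ]) * X₀ ^ 2 ≠ -(Δ : ℤ_[ℓ]) := by
  intro h
  have hmod : (PadicInt.toZMod Z₀) ^ 2 = (q : ZMod ℓ) * (PadicInt.toZMod X₀) ^ 2 := by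
    have := congrArg PadicInt.toZMod h
    simp only [map_sub, map_neg, map_pow, map_mul, map_natCast] at this
    have hΔ0 : ((Δ : ZMod ℓ)) = 0 := (ZMod.natCast_eq_zero_iff Δ ℓ).mpr hΔ1
    rw [hΔ0, neg_zero, sub_eq_zero] at this
    exact this
  obtain ⟨hZ, hX⟩ := zmod_sq_aux ℓ _ hq hmod
  obtain ⟨Z₁, hZ1⟩ := (toZMod_eq_zero_iff_dvd' ℓ Z₀).mp hZ
  obtain ⟨X₁, hX1⟩ := (toZMod_eq_zero_iff_dvd' ℓ X₀).mp hX
  have hdvd : ((ℓ : ℤ_[ℓ]) ^ 2) ∣ ((Δ : ℤ) : ℤ_[ℓ]) := by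
    refine ⟨(q : ℤ_[ℓ]) * X₁ ^ 2 - Z₁ ^ 2, ?_⟩
    push_cast
    have : -(Δ : ℤ_[ℓ]) = Z₀ ^ 2 - (q : ℤ_[ℓ]) * X₀ ^ 2 := h.symm
    rw [hZ1, hX1] at this
    linear_combination -this
  rw [PadicInt.pow_p_dvd_int_iff] at hdvd
  rw [show ((ℓ:ℤ))^2 = (ℓ:ℤ)*(ℓ:ℤ) by ring] at hdvd
  exact hΔ2 (by exact_mod_cast hdvd)

lemma no_rep_odd (ℓ q Δ : ℕ) [Fact ℓ.Prime] (hq : ¬ IsSquare ((q : ZMod ℓ)))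
    (hΔ1 : ℓ ∣ Δ) (hΔ2 : ¬ (ℓ * ℓ) ∣ Δ) (X Z : ℚ_[ℓ]) :
    Z ^ 2 - (q : ℚ_[ℓ]) * X ^ 2 ≠ -(Δ : ℚ_[ℓ]) := by
  intro h
  have hnΔ : ‖(Δ : ℚ_[ℓ])‖ ≤ 1 := by
    have := Padic.norm_int_le_one (p := ℓ) (Δ : ℤ)
    push_cast at this; exact this
  rcases le_total ‖X‖ ‖Z‖ with hle | hle
  · rcases le_or_gt ‖Z‖ 1 with h1 | h1
    · exact no_rep_odd_int ℓ q Δ hq hΔ1 hΔ2 ⟨X, le_trans hle h1⟩ ⟨Z, h1⟩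
        (by apply Subtype.coe_injective; push_cast; exact h)
    · have hZ0 : Z ≠ 0 := by rintro rfl; simp at h1; linarith
      set V : ℚ_[ℓ] := X / Z with hV
      set E : ℚ_[ℓ] := -(Δ : ℚ_[ℓ]) / Z ^ 2 with hE
      have hnV : ‖V‖ ≤ 1 := by
        rw [hV, norm_div]
        exact div_le_one_of_le₀ hle (norm_nonneg _)
      have hnE : ‖E‖ < 1 := by
        rw [hE, norm_div, norm_neg, norm_pow]
        have h2 : (1:ℝ) < ‖Z‖ ^ 2 := by nlinarith
        calc ‖(Δ:ℚ_[ℓ])‖ / ‖Z‖ ^ 2 ≤ 1 / ‖Z‖ ^ 2 := by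
              apply div_le_div_of_nonneg_right ?_ ?_ |>.trans_eq rfl
              · exact hnΔ
              · linarith
        _ < 1 := by rw [div_lt_one]; linarith; linarith
      have heq : 1 - (q : ℚ_[ℓ]) * V ^ 2 = E := by
        rw [hV, hE]
        field_simp
        linear_combination h
      set V₀ : ℤ_[ℓ] := ⟨V, hnV⟩ with hV₀
      set E₀ : ℤ_[ℓ] := ⟨E, le_of_lt hnE⟩ with hE₀
      have heqZ : (1 : ℤ_[ℓ]) - (q : ℤ_[ℓ]) * V₀ ^ 2 = E₀ := by
        apply Subtype.coe_injective; push_cast [hV₀, hE₀]; exact heq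
      have := congrArg PadicInt.toZMod heqZ
      simp only [map_sub, map_one, map_mul, map_pow, map_natCast] at this
      have hE0 : PadicInt.toZMod E₀ = 0 := by
        rw [toZMod_eq_zero_iff_dvd', ← PadicInt.norm_lt_one_iff_dvd]
        exact_mod_cast hnE
      rw [hE0, sub_eq_zero] at this
      set v := PadicInt.toZMod V₀ with hv
      have hv0 : v ≠ 0 := by
        rintro h0; rw [h0] at this; simp at this
      refine hq ⟨v⁻¹, ?_⟩
      have hvv : v * v⁻¹ = 1 := mul_inv_cancel₀ hv0
      calc (q : ZMod ℓ) = (q : ZMod ℓ) * (v * v⁻¹) ^ 2 := by rw [hvv]; ring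
      _ = 1 * (v⁻¹)^2 := by rw [mul_pow, ← mul_assoc]; rw [show (q : ZMod ℓ) * v ^ 2 = 1 from this.symm]
      _ = v⁻¹ * v⁻¹ := by ring
  · rcases le_or_gt ‖X‖ 1 with h1 | h1
    · exact no_rep_odd_int ℓ q Δ hq hΔ1 hΔ2 ⟨X, h1⟩ ⟨Z, le_trans hle h1⟩
        (by apply Subtype.coe_injective; push_cast; exact h)
    · have hX0 : X ≠ 0 := by rintro rfl; simp at h1; linarith
      set W : ℚ_[ℓ] := Z / X with hW
      set E : ℚ_[ℓ] := -(Δ : ℚ_[ℓ]) / X ^ 2 with hE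
      have hnW : ‖W‖ ≤ 1 := by
        rw [hW, norm_div]
        exact div_le_one_of_le₀ hle (norm_nonneg _)
      have hnE : ‖E‖ < 1 := by
        rw [hE, norm_div, norm_neg, norm_pow]
        have h2 : (1:ℝ) < ‖X‖ ^ 2 := by nlinarith
        calc ‖(Δ:ℚ_[ℓ])‖ / ‖X‖ ^ 2 ≤ 1 / ‖X‖ ^ 2 := by
              apply div_le_div_of_nonneg_right ?_ ?_ |>.trans_eq rfl
              · exact hnΔ
              · linarith
        _ < 1 := by rw [div_lt_one]; linarith; linarith
      have heq : W ^ 2 - (q : ℚ_[ℓ]) = E := by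
        rw [hW, hE]
        field_simp
        linear_combination h
      set W₀ : ℤ_[ℓ] := ⟨W, hnW⟩ with hW₀
      set E₀ : ℤ_[ℓ] := ⟨E, le_of_lt hnE⟩ with hE₀
      have heqZ : W₀ ^ 2 - (q : ℤ_[ℓ]) = E₀ := by
        apply Subtype.coe_injective; push_cast [hW₀, hE₀]; exact heq
      have := congrArg PadicInt.toZMod heqZ
      simp only [map_sub, map_pow, map_natCast] at this
      have hE0 : PadicInt.toZMod E₀ = 0 := by
        rw [toZMod_eq_zero_iff_dvd', ← PadicInt.norm_lt_one_iff_dvd]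
        exact_mod_cast hnE
      rw [hE0, sub_eq_zero] at this
      exact hq ⟨PadicInt.toZMod W₀, by rw [← this, sq]⟩

lemma no_sol_odd (ℓ q Δ : ℕ) [Fact ℓ.Prime] (hq : ¬ IsSquare ((q : ZMod ℓ)))
    (hΔ1 : ℓ ∣ Δ) (hΔ2 : ¬ (ℓ * ℓ) ∣ Δ) :
    ¬ ∃ x y z : ℚ_[ℓ], (x, y, z) ≠ (0, 0, 0) ∧
      z ^ 2 = ((q : ℚ) : ℚ_[ℓ]) * x ^ 2 + ((-(Δ : ℚ)) : ℚ_[ℓ]) * y ^ 2 := by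
  rintro ⟨x, y, z, hne, heq⟩
  push_cast at heq
  have hqd : ¬ ℓ ∣ q := by
    intro hd
    exact hq ⟨0, by rw [(ZMod.natCast_eq_zero_iff q ℓ).mpr hd]; ring⟩
  by_cases hy : y = 0
  · subst hy
    by_cases hx : x = 0
    · subst hx
      have hz : z = 0 := by
        have : z ^ 2 = 0 := by rw [heq]; ring
        exact pow_eq_zero_iff (by norm_num) |>.mp this
      exact hne (by simp [hz])
    · have ht : (z / x) ^ 2 = (q : ℚ_[ℓ]) := by
        field_simp
        linear_combination heq
      obtain ⟨T, hT⟩ := unit_sq_lift ℓ q hqd _ ht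
      have := congrArg PadicInt.toZMod hT
      rw [map_pow, map_natCast] at this
      exact hq ⟨PadicInt.toZMod T, by rw [← this, sq]⟩
  · refine no_rep_odd ℓ q Δ hq hΔ1 hΔ2 (x / y) (z / y) ?_
    field_simp
    linear_combination heq

lemma cast_eq_of_mod (a n r : ℕ) (h : a % n = r) : ((a : ZMod n)) = (r : ZMod n) := by
  conv_lhs => rw [← Nat.mod_add_div a n]
  rw [h]; push_cast; simp

lemma toZModPow_eq_zero_of_norm_le (p : ℕ) [Fact p.Prime] (n : ℕ) (x : ℤ_[p])
    (h : ‖x‖ ≤ (p : ℝ) ^ (-(n : ℤ))) : PadicInt.toZModPow n x = 0 := by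
  have := (PadicInt.norm_le_pow_iff_mem_span_pow x n).mp h
  obtain ⟨c, hc⟩ := Ideal.mem_span_singleton.mp this
  rw [hc, map_mul, map_pow, map_natCast]
  have : ((p : ZMod (p ^ n))) ^ n = 0 := by
    have : (((p ^ n : ℕ)) : ZMod (p ^ n)) = 0 := ZMod.natCast_self _
    push_cast at this
    exact this
  rw [this, zero_mul]

lemma no_rep_two_int (q Δ : ℕ) (hq : q % 4 = 1) (hΔ : Δ % 4 = 2) (X₀ Z₀ : ℤ_[2]) :
    Z₀ ^ 2 - (q : ℤ_[2]) * X₀ ^ 2 ≠ -(Δ : ℤ_[2]) := by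
  intro h
  have h4 := congrArg (PadicInt.toZModPow 2) h
  simp only [map_sub, map_neg, map_pow, map_mul, map_natCast] at h4
  rw [cast_eq_of_mod q (2^2) 1 (by omega), cast_eq_of_mod Δ (2^2) 2 (by omega)] at h4
  have : ∀ a b : ZMod (2 ^ 2), a ^ 2 - ((1:ℕ) : ZMod (2^2)) * b ^ 2 ≠ -((2:ℕ) : ZMod (2^2)) := by
    decide
  exact this _ _ h4

lemma no_rep_two (q Δ : ℕ) (hq : q % 8 = 5) (hΔ1 : 2 ∣ Δ) (hΔ2 : ¬ (2 * 2) ∣ Δ)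
    (X Z : ℚ_[2]) : Z ^ 2 - (q : ℚ_[2]) * X ^ 2 ≠ -(Δ : ℚ_[2]) := by
  intro h
  have hnΔ : ‖(Δ : ℚ_[2])‖ ≤ ((2:ℝ))⁻¹ := by
    have := (Padic.norm_int_le_pow_iff_dvd (p := 2) (Δ : ℤ) 1).mpr
      (by exact_mod_cast hΔ1)
    push_cast at this
    simpa using this
  have hq8 : ((q : ZMod (2^3))) = ((5:ℕ) : ZMod (2^3)) := cast_eq_of_mod q (2^3) 5 (by omega)
  rcases le_total ‖X‖ ‖Z‖ with hle | hle
  · rcases le_or_gt ‖Z‖ 1 with h1 | h1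
    · exact no_rep_two_int q Δ (by omega) (by omega) ⟨X, le_trans hle h1⟩ ⟨Z, h1⟩
        (by apply Subtype.coe_injective; push_cast; exact h)
    · have hZ2 : (2:ℝ) ≤ ‖Z‖ := by exact_mod_cast norm_ge_of_gt_one (p := 2) h1
      have hZ0 : Z ≠ 0 := by rintro rfl; simp at h1; linarith
      set V : ℚ_[2] := X / Z with hV
      set E : ℚ_[2] := -(Δ : ℚ_[2]) / Z ^ 2 with hE
      have hnV : ‖V‖ ≤ 1 := by
        rw [hV, norm_div]; exact div_le_one_of_le₀ hle (norm_nonneg _)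
      have hnE : ‖E‖ ≤ (2:ℝ)^(-(3:ℤ)) := by
        rw [hE, norm_div, norm_neg, norm_pow]
        have hZsq : (4:ℝ) ≤ ‖Z‖ ^ 2 := by nlinarith
        calc ‖(Δ:ℚ_[2])‖ / ‖Z‖ ^ 2 ≤ (2:ℝ)⁻¹ / 4 :=
              div_le_div₀ (by norm_num) hnΔ (by norm_num) hZsq
        _ = (2:ℝ)^(-(3:ℤ)) := by norm_num
      have hnE1 : ‖E‖ ≤ 1 := le_trans hnE (by norm_num)
      have heq : 1 - (q : ℚ_[2]) * V ^ 2 = E := by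
        rw [hV, hE]
        field_simp
        linear_combination h
      set V₀ : ℤ_[2] := ⟨V, hnV⟩ with hV₀
      set E₀ : ℤ_[2] := ⟨E, hnE1⟩ with hE₀
      have heqZ : (1 : ℤ_[2]) - (q : ℤ_[2]) * V₀ ^ 2 = E₀ := by
        apply Subtype.coe_injective; push_cast [hV₀, hE₀]; exact heq
      have h8 := congrArg (PadicInt.toZModPow 3) heqZ
      have hE80 : PadicInt.toZModPow 3 E₀ = 0 :=
        toZModPow_eq_zero_of_norm_le 2 3 E₀ (by exact_mod_cast hnE)
      simp only [map_sub, map_one, map_mul, map_pow, map_natCast, hE80] at h8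
      rw [hq8] at h8
      have : ∀ v : ZMod (2^3), (1:ZMod (2^3)) - ((5:ℕ) : ZMod (2^3)) * v ^ 2 ≠ 0 := by decide
      exact this _ h8
  · rcases le_or_gt ‖X‖ 1 with h1 | h1
    · exact no_rep_two_int q Δ (by omega) (by omega) ⟨X, h1⟩ ⟨Z, le_trans hle h1⟩
        (by apply Subtype.coe_injective; push_cast; exact h)
    · have hX2 : (2:ℝ) ≤ ‖X‖ := by exact_mod_cast norm_ge_of_gt_one (p := 2) h1
      have hX0 : X ≠ 0 := by rintro rfl; simp at h1; linarith
      set W : ℚ_[2] := Z / X with hW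
      set E : ℚ_[2] := -(Δ : ℚ_[2]) / X ^ 2 with hE
      have hnW : ‖W‖ ≤ 1 := by
        rw [hW, norm_div]; exact div_le_one_of_le₀ hle (norm_nonneg _)
      have hnE : ‖E‖ ≤ (2:ℝ)^(-(3:ℤ)) := by
        rw [hE, norm_div, norm_neg, norm_pow]
        have hXsq : (4:ℝ) ≤ ‖X‖ ^ 2 := by nlinarith
        calc ‖(Δ:ℚ_[2])‖ / ‖X‖ ^ 2 ≤ (2:ℝ)⁻¹ / 4 :=
              div_le_div₀ (by norm_num) hnΔ (by norm_num) hXsq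
        _ = (2:ℝ)^(-(3:ℤ)) := by norm_num
      have hnE1 : ‖E‖ ≤ 1 := le_trans hnE (by norm_num)
      have heq : W ^ 2 - (q : ℚ_[2]) = E := by
        rw [hW, hE]
        field_simp
        linear_combination h
      set W₀ : ℤ_[2] := ⟨W, hnW⟩ with hW₀
      set E₀ : ℤ_[2] := ⟨E, hnE1⟩ with hE₀
      have heqZ : W₀ ^ 2 - (q : ℤ_[2]) = E₀ := by
        apply Subtype.coe_injective; push_cast [hW₀, hE₀]; exact heq
      have h8 := congrArg (PadicInt.toZModPow 3) heqZ
      have hE80 : PadicInt.toZModPow 3 E₀ = 0 :=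
        toZModPow_eq_zero_of_norm_le 2 3 E₀ (by exact_mod_cast hnE)
      simp only [map_sub, map_pow, map_natCast, hE80] at h8
      rw [hq8] at h8
      have : ∀ w : ZMod (2^3), w ^ 2 - ((5:ℕ) : ZMod (2^3)) ≠ 0 := by decide
      exact this _ h8

lemma no_sol_two (q Δ : ℕ) (hq : q % 8 = 5) (hΔ1 : 2 ∣ Δ) (hΔ2 : ¬ (2 * 2) ∣ Δ) :
    ¬ ∃ x y z : ℚ_[2], (x, y, z) ≠ (0, 0, 0) ∧
      z ^ 2 = ((q : ℚ) : ℚ_[2]) * x ^ 2 + ((-(Δ : ℚ)) : ℚ_[2]) * y ^ 2 := by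
  rintro ⟨x, y, z, hne, heq⟩
  push_cast at heq
  have hq8 : ((q : ZMod (2^3))) = ((5:ℕ) : ZMod (2^3)) := cast_eq_of_mod q (2^3) 5 (by omega)
  by_cases hy : y = 0
  · subst hy
    by_cases hx : x = 0
    · subst hx
      have hz : z = 0 := by
        have : z ^ 2 = 0 := by rw [heq]; ring
        exact pow_eq_zero_iff (by norm_num) |>.mp this
      exact hne (by simp [hz])
    · have ht : (z / x) ^ 2 = (q : ℚ_[2]) := by
        field_simp
        linear_combination heq
      obtain ⟨T, hT⟩ := unit_sq_lift 2 q (by omega) _ ht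
      have h8 := congrArg (PadicInt.toZModPow 3) hT
      rw [map_pow, map_natCast, hq8] at h8
      have : ∀ t : ZMod (2^3), t ^ 2 ≠ ((5:ℕ) : ZMod (2^3)) := by decide
      exact this _ h8
  · refine no_rep_two q Δ hq hΔ1 hΔ2 (x / y) (z / y) ?_
    field_simp
    linear_combination heq

lemma legendreSym_prod (q : ℕ) [Fact q.Prime] (s : Finset ℕ) (f : ℕ → ℤ) :
    legendreSym q (∏ i ∈ s, f i) = ∏ i ∈ s, legendreSym q (f i) := by
  classical
  induction s using Finset.cons_induction with
  | empty => simp [legendreSym.at_one]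
  | cons a s ha ih =>
      rw [Finset.prod_cons, Finset.prod_cons, legendreSym.mul, ih]

lemma neg_delta_is_square (q Δ : ℕ) [Fact q.Prime] (hq2 : q ≠ 2) (hq4 : q % 4 = 1)
    (hqΔ : ¬ q ∣ Δ) (hsf : Squarefree Δ) (hΔpos : 0 < Δ) (heven : Even Δ.primeFactors.card)
    (hodd : ∀ ℓ ∈ Δ.primeFactors, ℓ ≠ 2 → ¬ IsSquare ((q : ZMod ℓ)))
    (h2 : 2 ∈ Δ.primeFactors → q % 8 = 5) :
    IsSquare (-(Δ : ZMod q)) := by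
  have hΔ : (∏ ℓ ∈ Δ.primeFactors, ℓ) = Δ := Nat.prod_primeFactors_of_squarefree hsf
  have hfac : ∀ ℓ ∈ Δ.primeFactors, legendreSym q (ℓ : ℤ) = -1 := by
    intro ℓ hℓ
    have hℓp : ℓ.Prime := Nat.prime_of_mem_primeFactors hℓ
    haveI := Fact.mk hℓp
    by_cases hℓ2 : ℓ = 2
    · subst hℓ2
      rw [show ((2:ℕ):ℤ) = (2:ℤ) by norm_num, legendreSym.at_two hq2,
        ZMod.χ₈_nat_eq_if_mod_eight]
      have := h2 hℓ
      have hq2' : q % 2 = 1 := by omega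
      rw [if_neg (by omega), if_neg (by omega)]
    · rw [← legendreSym.quadratic_reciprocity_one_mod_four (p := q) (q := ℓ) hq4 hℓ2]
      exact legendreSym.eq_neg_one_iff' (p := ℓ) |>.mpr (hodd ℓ hℓ hℓ2)
  have hprod : legendreSym q ((Δ : ℤ)) = 1 := by
    rw [← hΔ]
    push_cast
    rw [legendreSym_prod]
    rw [Finset.prod_congr rfl hfac, Finset.prod_const]
    exact Even.neg_one_pow heven
  have hneg1 : legendreSym q (-1) = 1 := by
    rw [legendreSym.at_neg_one hq2]
    exact ZMod.χ₄_nat_one_mod_four hq4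
  have htotal : legendreSym q (-(Δ : ℤ)) = 1 := by
    rw [show (-(Δ:ℤ)) = -1 * Δ by ring, legendreSym.mul, hneg1, hprod]; norm_num
  have hne : (((-(Δ:ℤ)) : ℤ) : ZMod q) ≠ 0 := by
    push_cast
    refine neg_ne_zero.mpr (zmod_natCast_ne_zero q Δ hqΔ)
  have := (legendreSym.eq_one_iff q hne).mp htotal
  rwa [show (((-(Δ:ℤ)) : ℤ) : ZMod q) = -(Δ : ZMod q) by push_cast; ring] at this

/-- The Hilbert symbol `(a,b)_ℓ ∈ {±1}` over `ℚ_ℓ`: it is `1` exactly when the quadratic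
form `z² = a x² + b y²` has a nontrivial solution over `ℚ_ℓ`. -/
noncomputable def hilbertSymbol (ℓ : ℕ) [Fact ℓ.Prime] (a b : ℚ) : ℤ :=
  letI := Classical.propDecidable
  if ∃ x y z : ℚ_[ℓ], (x, y, z) ≠ (0, 0, 0) ∧
      z ^ 2 = (a : ℚ_[ℓ]) * x ^ 2 + (b : ℚ_[ℓ]) * y ^ 2 then 1 else -1

lemma hilbertSymbol_eq_neg_one_iff (ℓ : ℕ) [Fact ℓ.Prime] (a b : ℚ) :
    hilbertSymbol ℓ a b = -1 ↔ ¬ ∃ x y z : ℚ_[ℓ], (x, y, z) ≠ (0, 0, 0) ∧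
      z ^ 2 = (a : ℚ_[ℓ]) * x ^ 2 + (b : ℚ_[ℓ]) * y ^ 2 := by
  rw [hilbertSymbol]
  split_ifs with h
  · constructor
    · intro h1; exact absurd h1 (by norm_num)
    · intro h1; exact absurd h h1
  · exact iff_of_true rfl h

/-- For an odd prime `p` with `gcd(p, 2Δ) = 1`, where `Δ` is a squarefree
positive integer with an even number of prime factors, there exists a prime `q ≡ 1 (mod 4)`
which is a quadratic residue mod `p` and such that the Hilbert symbol `(q, -Δ)_ℓ = -1`
if and only if `ℓ ∣ Δ`  (existence of the auxiliary prime in the Hashimoto model). -/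
theorem exists_hashimoto_auxiliary_prime (Δ p : ℕ) (hΔpos : 0 < Δ)
    (hsf : Squarefree Δ) (heven : Even Δ.primeFactors.card)
    (hp : p.Prime) (hodd : Odd p) (hgcd : Nat.gcd p (2 * Δ) = 1) :
    ∃ q : ℕ, q.Prime ∧ q % 4 = 1 ∧ IsSquare (q : ZMod p) ∧
      ∀ (ℓ : ℕ) [Fact ℓ.Prime], (hilbertSymbol ℓ (q : ℚ) (-(Δ : ℚ)) = -1 ↔ ℓ ∣ Δ) := by
  classical
  -- basic facts about p and Δ
  have hp2 : p ≠ 2 := by rintro rfl; exact (by norm_num : ¬ Odd 2) hodd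
  have hpΔ : ¬ p ∣ Δ := by
    intro hd
    have : p ∣ Nat.gcd p (2 * Δ) := Nat.dvd_gcd dvd_rfl (hd.mul_left 2)
    rw [hgcd] at this
    exact hp.one_lt.ne' (Nat.eq_one_of_dvd_one this)
  -- odd prime factors of Δ
  set P2 := Δ.primeFactors.erase 2 with hP2
  have hP2mem : ∀ ℓ ∈ P2, ℓ.Prime ∧ ℓ ≠ 2 ∧ ℓ ∣ Δ := by
    intro ℓ hℓ
    obtain ⟨hne, hmem⟩ := Finset.mem_erase.mp hℓ
    exact ⟨Nat.prime_of_mem_primeFactors hmem, hne, Nat.dvd_of_mem_primeFactors hmem⟩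
  -- choose a nonresidue mod each odd prime factor
  have hns : ∀ ℓ : ℕ, ∃ m : ℕ, ℓ ∈ P2 → ¬ IsSquare ((m : ZMod ℓ)) := by
    intro ℓ
    by_cases hℓ : ℓ ∈ P2
    · obtain ⟨hpr, h2, -⟩ := hP2mem ℓ hℓ
      haveI := Fact.mk hpr
      have hchar : ringChar (ZMod ℓ) ≠ 2 := by
        rw [ZMod.ringChar_zmod_n]; exact h2
      obtain ⟨u, hu⟩ := FiniteField.exists_nonsquare hchar
      exact ⟨u.val, fun _ => by rwa [ZMod.natCast_val, ZMod.cast_id]⟩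
    · exact ⟨0, fun h => absurd h hℓ⟩
  choose nr hnr using hns
  set c : ℕ := if 2 ∣ Δ then 5 else 1 with hc
  have hc8 : c = 5 ∨ c = 1 := by rw [hc]; split_ifs <;> simp
  set a : ℕ → ℕ := fun n => if n = 8 then c else if n = p then 1 else nr n with ha
  set t : Finset ℕ := insert 8 (insert p P2) with ht
  have hmem_t : ∀ i ∈ t, i = 8 ∨ i = p ∨ i ∈ P2 := by
    intro i hi
    rcases Finset.mem_insert.mp hi with h | h
    · exact Or.inl h
    rcases Finset.mem_insert.mp h with h | h
    · exact Or.inr (Or.inl h)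
    · exact Or.inr (Or.inr h)
  have hp8 : p ≠ 8 := by rintro rfl; norm_num at hp
  have h8P2 : (8:ℕ) ∉ P2 := fun h => by have := (hP2mem 8 h).1; norm_num at this
  have hpP2 : p ∉ P2 := fun h => hpΔ (hP2mem p h).2.2
  have hne_t : ∀ i ∈ t, (id i : ℕ) ≠ 0 := by
    intro i hi
    rcases hmem_t i hi with rfl | rfl | h
    · norm_num
    · exact hp.pos.ne'
    · exact (hP2mem i h).1.pos.ne'
  have co8 : ∀ j, Nat.Prime j → j ≠ 2 → Nat.Coprime 8 j := by
    intro j hj h2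
    have h1 : Nat.Coprime 2 j := (Nat.coprime_primes Nat.prime_two hj).mpr (Ne.symm h2)
    rw [show (8:ℕ) = 2 ^ 3 by norm_num]
    exact Nat.Coprime.pow_left 3 h1
  have hcop : ∀ i ∈ t, ∀ j ∈ t, i ≠ j → Nat.Coprime i j := by
    intro i hi j hj hij
    rcases hmem_t i hi with h1 | h1 | h1 <;> rcases hmem_t j hj with h2 | h2 | h2
    · exact absurd (h1.trans h2.symm) hij
    · rw [h1, h2]; exact co8 p hp hp2
    · rw [h1]; exact co8 j (hP2mem j h2).1 (hP2mem j h2).2.1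
    · rw [h1, h2]; exact (co8 p hp hp2).symm
    · exact absurd (h1.trans h2.symm) hij
    · rw [h1]; exact (Nat.coprime_primes hp (hP2mem j h2).1).mpr (fun h => hpP2 (h ▸ h2))
    · rw [h2]; exact (co8 i (hP2mem i h1).1 (hP2mem i h1).2.1).symm
    · rw [h2]; exact (Nat.coprime_primes (hP2mem i h1).1 hp).mpr (fun h => hpP2 (h ▸ h1))
    · exact (Nat.coprime_primes (hP2mem i h1).1 (hP2mem j h2).1).mpr hij
  have pp : Set.Pairwise ↑t (Function.onFun Nat.Coprime id) := by
    intro i hi j hj hij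
    exact hcop i hi j hj hij
  obtain ⟨r, hr⟩ := Nat.chineseRemainderOfFinset a id t hne_t pp
  set M : ℕ := ∏ i ∈ t, i with hM
  have hMpos : 0 < M := Finset.prod_pos (fun i hi => Nat.pos_of_ne_zero (hne_t i hi))
  haveI : NeZero M := ⟨hMpos.ne'⟩
  have hcop_a : ∀ i ∈ t, Nat.Coprime (a i) i := by
    intro i hi
    rcases hmem_t i hi with h1 | h1 | hiP
    · have h3 : a i = c := by simp [ha, h1]
      rw [h3, h1]
      rcases hc8 with h | h <;> rw [h] <;> decide
    · have h3 : a i = 1 := by simp [ha, h1, hp8]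
      rw [h3]
      exact Nat.coprime_one_left _
    · obtain ⟨hpr, h2, hdvd⟩ := hP2mem i hiP
      have hi8 : i ≠ 8 := fun h => h8P2 (h ▸ hiP)
      have hip : i ≠ p := fun h => hpP2 (h ▸ hiP)
      have hai : a i = nr i := by simp [ha, hi8, hip]
      rw [hai]
      haveI := Fact.mk hpr
      have hnz : ¬ i ∣ nr i := by
        intro hd
        have h0 : ((nr i : ZMod i)) = 0 := (ZMod.natCast_eq_zero_iff _ _).mpr hd
        exact hnr i hiP ⟨0, by rw [h0]; ring⟩
      exact (Nat.Prime.coprime_iff_not_dvd hpr).mpr hnz |>.symm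
  have hcoprimeRM : Nat.Coprime (r : ℕ) M := by
    rw [hM]
    apply Nat.Coprime.prod_right
    intro i hi
    have hg : Nat.gcd (r : ℕ) i = Nat.gcd (a i) i := Nat.ModEq.gcd_eq (hr i hi)
    exact show Nat.Coprime _ i by rw [Nat.Coprime, hg]; exact hcop_a i hi
  have hunit : IsUnit (((r : ℕ) : ZMod M)) := (ZMod.isUnit_iff_coprime _ M).mpr hcoprimeRM
  obtain ⟨q, hqgt, hqpr, hqcast⟩ := Nat.forall_exists_prime_gt_and_eq_mod hunit (Δ + p + 8)
  have hqmod : ∀ i ∈ t, q ≡ a i [MOD i] := by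
    intro i hi
    have h1 : q ≡ (r : ℕ) [MOD M] := (ZMod.natCast_eq_natCast_iff _ _ _).mp hqcast
    have h2 : q ≡ (r : ℕ) [MOD i] := h1.of_dvd (Finset.dvd_prod_of_mem _ hi)
    exact h2.trans (hr i hi)
  have h8t : (8:ℕ) ∈ t := Finset.mem_insert_self _ _
  have hpt : p ∈ t := Finset.mem_insert_of_mem (Finset.mem_insert_self _ _)
  have hq8 : q % 8 = c := by
    have h1 := hqmod 8 h8t
    have ha8 : a 8 = c := by simp [ha]
    rw [ha8] at h1
    have h2 : q % 8 = c % 8 := h1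
    rcases hc8 with h | h <;> omega
  have hq15 : q % 8 = 5 ∨ q % 8 = 1 := by rcases hc8 with h | h <;> [left; right] <;> omega
  have hq4 : q % 4 = 1 := by omega
  have hq2 : q ≠ 2 := by omega
  have hqΔ : ¬ q ∣ Δ := fun hd => by have := Nat.le_of_dvd hΔpos hd; omega
  have hqsqp : IsSquare ((q : ZMod p)) := by
    have h1 := hqmod p hpt
    have hap : a p = 1 := by simp [ha, hp8]
    rw [hap] at h1
    have h2 : (q : ZMod p) = ((1:ℕ) : ZMod p) := (ZMod.natCast_eq_natCast_iff _ _ _).mpr h1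
    rw [Nat.cast_one] at h2
    rw [h2]
    exact IsSquare.one
  have hqns : ∀ ℓ ∈ P2, ¬ IsSquare ((q : ZMod ℓ)) := by
    intro ℓ hℓ
    have hℓt : ℓ ∈ t := Finset.mem_insert_of_mem (Finset.mem_insert_of_mem hℓ)
    have hmod := hqmod ℓ hℓt
    have hℓ8 : ℓ ≠ 8 := fun h => h8P2 (h ▸ hℓ)
    have hℓp : ℓ ≠ p := fun h => hpP2 (h ▸ hℓ)
    have haℓ : a ℓ = nr ℓ := by simp [ha, hℓ8, hℓp]
    rw [haℓ] at hmod
    have hcasteq : (q : ZMod ℓ) = ((nr ℓ : ℕ) : ZMod ℓ) :=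
      (ZMod.natCast_eq_natCast_iff _ _ _).mpr hmod
    rw [hcasteq]
    exact hnr ℓ hℓ
  have hsq_ll : ∀ ℓ, Nat.Prime ℓ → ¬ (ℓ * ℓ) ∣ Δ :=
    fun ℓ hpr hd => hpr.ne_one (Nat.isUnit_iff.mp (hsf ℓ hd))
  have hq8five : 2 ∣ Δ → q % 8 = 5 := by
    intro h; rw [hq8, hc, if_pos h]
  have hq8one : ¬ 2 ∣ Δ → q % 8 = 1 := by
    intro h; rw [hq8, hc, if_neg h]
  haveI hqfact : Fact q.Prime := ⟨hqpr⟩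
  have hnegsq : IsSquare (-(Δ : ZMod q)) :=
    neg_delta_is_square q Δ hq2 hq4 hqΔ hsf hΔpos heven
      (fun ℓ hℓ h2 => hqns ℓ (Finset.mem_erase.mpr ⟨h2, hℓ⟩))
      (fun h2 => hq8five (Nat.dvd_of_mem_primeFactors h2))
  refine ⟨q, hqpr, hq4, hqsqp, ?_⟩
  intro ℓ instℓ
  rw [hilbertSymbol_eq_neg_one_iff]
  have hℓpr : ℓ.Prime := instℓ.out
  by_cases hdvd : ℓ ∣ Δ
  · refine iff_of_true ?_ hdvd
    by_cases hℓ2 : ℓ = 2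
    · subst hℓ2
      exact no_sol_two q Δ (hq8five hdvd) hdvd (hsq_ll 2 Nat.prime_two)
    · exact no_sol_odd ℓ q Δ
        (hqns ℓ (Finset.mem_erase.mpr ⟨hℓ2,
          Nat.mem_primeFactors.mpr ⟨hℓpr, hdvd, hΔpos.ne'⟩⟩)) hdvd (hsq_ll ℓ hℓpr)
  · refine iff_of_false (not_not_intro ?_) hdvd
    by_cases hℓ2 : ℓ = 2
    · subst hℓ2
      exact exists_sol_at_two q Δ (hq8one hdvd)
    · by_cases hℓq : ℓ = q
      · subst hℓq
        exact exists_sol_at_q ℓ Δ hq2 hqΔ hnegsq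
      · exact exists_sol_generic ℓ hℓ2 q Δ
          (fun hd => hℓq ((Nat.prime_dvd_prime_iff_eq hℓpr hqpr).mp hd)) hdvd
end

section
/- Let μ be a measure on Z_p with values in a p-adic Banach space, with associated Mahler power series F(T) = Σ_{r≥0} a_r T^r where a_r = ∫_{Z_p} binom(t,r) dμ(t). Then the restriction μ^× of μ to Z_p^× (extending functions by zero on pZ_p) has associated power series F^×(T) = F(T) - (1/p)·Σ_{ζ ∈ μ_p} F(ζT + ζ - 1), where μ_p denotes the p-th roots of unity. -/
namespace RUPS

variable {p : ℕ} [hp : Fact p.Prime]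

noncomputable def bq (r : ℕ) (x : ℚ_[p]) : ℚ_[p] :=
  (r.factorial : ℚ_[p])⁻¹ * (descPochhammer ℚ_[p] r).eval x

lemma bq_nat (r m : ℕ) : bq r ((m : ℚ_[p])) = (m.choose r : ℚ_[p]) := by
  rw [bq, descPochhammer_eval_eq_descFactorial, Nat.descFactorial_eq_factorial_mul_choose]
  have : (r.factorial : ℚ_[p]) ≠ 0 := Nat.cast_ne_zero.2 r.factorial_ne_zero
  push_cast
  field_simp

lemma bq_identity (n s : ℕ) (x : ℚ_[p]) :
    bq (n + s) x * ((n + s).choose n : ℚ_[p]) = bq n x * bq s (x - (n : ℚ_[p])) := by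
  have hd := descPochhammer_mul (R := ℚ_[p]) n s
  have hev : (descPochhammer ℚ_[p] (n + s)).eval x
      = (descPochhammer ℚ_[p] n).eval x * (descPochhammer ℚ_[p] s).eval (x - n) := by
    rw [← hd]; simp [Polynomial.eval_comp]
  have hfac : ((n + s).choose n : ℚ_[p]) * (n.factorial : ℚ_[p]) * (s.factorial : ℚ_[p])
      = ((n + s).factorial : ℚ_[p]) := by
    have := Nat.add_choose_mul_factorial_mul_factorial s n
    rw [Nat.add_comm s n] at this
    rw_mod_cast [← this]
    ring
  have h1 : (n.factorial : ℚ_[p]) ≠ 0 := Nat.cast_ne_zero.2 n.factorial_ne_zero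
  have h2 : (s.factorial : ℚ_[p]) ≠ 0 := Nat.cast_ne_zero.2 s.factorial_ne_zero
  have h3 : ((n + s).factorial : ℚ_[p]) ≠ 0 := Nat.cast_ne_zero.2 (n + s).factorial_ne_zero
  rw [bq, bq, bq, hev]
  field_simp
  rw [← hfac]
  ring

lemma norm_bq_le_one (r : ℕ) (t : ℤ_[p]) : ‖bq r (t : ℚ_[p])‖ ≤ 1 := by
  have hcont : Continuous fun t : ℤ_[p] => ‖bq r (t : ℚ_[p])‖ := by
    apply Continuous.norm
    exact (continuous_const.mul ((descPochhammer ℚ_[p] r).continuous)).comp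
      continuous_subtype_val
  have hclosed : IsClosed {t : ℤ_[p] | ‖bq r (t : ℚ_[p])‖ ≤ 1} :=
    isClosed_Iic.preimage hcont
  refine PadicInt.denseRange_natCast.induction_on t hclosed ?_
  intro m
  rw [show ((m : ℤ_[p]) : ℚ_[p]) = (m : ℚ_[p]) by push_cast; ring, bq_nat]
  exact_mod_cast Padic.norm_int_le_one ((m.choose r : ℤ))

lemma norm_natCast_le_one_K (p : ℕ) [hp : Fact p.Prime] {K : Type*}
    [NontriviallyNormedField K] [NormedAlgebra ℚ_[p] K] (c : ℕ) : ‖(c : K)‖ ≤ 1 := by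
  have : (c : K) = algebraMap ℚ_[p] K (c : ℚ_[p]) := by rw [map_natCast]
  rw [this, norm_algebraMap']
  exact_mod_cast Padic.norm_int_le_one (c : ℤ)

lemma norm_zeta_eq_one {K : Type*}
    [NontriviallyNormedField K] {ζ : K} (hζ : ζ ^ p = 1) : ‖ζ‖ = 1 := by
  have hp0 : p ≠ 0 := hp.out.ne_zero
  have h : ‖ζ‖ ^ p = 1 := by rw [← norm_pow, hζ, norm_one]
  rcases lt_trichotomy ‖ζ‖ 1 with h1 | h1 | h1
  · exact absurd h (by have := pow_lt_one₀ (norm_nonneg ζ) h1 hp0; linarith)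
  · exact h1
  · exact absurd h (by have := one_lt_pow₀ h1 hp0; linarith)

lemma roots_sum {K : Type*} [NontriviallyNormedField K]
    (S : Finset K) (hS : ∀ ζ : K, ζ ∈ S ↔ ζ ^ p = 1) (hcard : S.card = p)
    (m : ℕ) : ∑ ζ ∈ S, ζ ^ m = if p ∣ m then (p : K) else 0 := by
  by_cases hdvd : p ∣ m
  · obtain ⟨k, rfl⟩ := hdvd
    rw [if_pos ⟨k, rfl⟩]
    rw [Finset.sum_congr rfl (fun ζ hζ => by rw [pow_mul, (hS ζ).1 hζ, one_pow])]
    simp [hcard]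
  · rw [if_neg hdvd]
    have hlt : 1 < S.card := by rw [hcard]; exact hp.out.one_lt
    obtain ⟨ζ₀, hζ₀S, hζ₀⟩ := Finset.exists_mem_ne hlt 1
    have hζ₀p : ζ₀ ^ p = 1 := (hS ζ₀).1 hζ₀S
    have hζ₀0 : ζ₀ ≠ 0 := fun h => by simp [h, zero_pow hp.out.ne_zero] at hζ₀p
    have hne : ζ₀ ^ m ≠ 1 := by
      intro h
      have hd1 : orderOf ζ₀ ∣ p := orderOf_dvd_of_pow_eq_one hζ₀p
      have hd2 : orderOf ζ₀ ∣ m := orderOf_dvd_of_pow_eq_one h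
      rcases (Nat.Prime.eq_one_or_self_of_dvd hp.out _ hd1) with ho | ho
      · exact hζ₀ (orderOf_eq_one_iff.1 ho)
      · exact hdvd (ho ▸ hd2)
    have key : ζ₀ ^ m * ∑ ζ ∈ S, ζ ^ m = ∑ ζ ∈ S, ζ ^ m := by
      rw [Finset.mul_sum]
      refine Finset.sum_nbij' (fun ζ => ζ₀ * ζ) (fun ζ => ζ₀⁻¹ * ζ) ?_ ?_ ?_ ?_ ?_
      · intro ζ hζ
        exact (hS _).2 (by rw [mul_pow, hζ₀p, (hS ζ).1 hζ, one_mul])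
      · intro ζ hζ
        refine (hS _).2 ?_
        rw [mul_pow, inv_pow, hζ₀p, inv_one, (hS ζ).1 hζ, one_mul]
      · intro ζ _; field_simp
      · intro ζ _; field_simp
      · intro ζ _; rw [mul_pow]
    have h0 : (ζ₀ ^ m - 1) * ∑ ζ ∈ S, ζ ^ m = 0 := by rw [sub_mul, key]; ring
    rcases mul_eq_zero.1 h0 with h | h
    · exact absurd (sub_eq_zero.1 h) hne
    · exact h

lemma indicator_continuous (p : ℕ) [hp : Fact p.Prime] {K : Type*}
    [NontriviallyNormedField K] :
    Continuous (fun t : ℤ_[p] => if ‖t‖ = 1 then (0 : K) else (p : K)) := by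
  rw [continuous_iff_continuousAt]
  intro t
  apply Filter.EventuallyEq.continuousAt (y := if ‖t‖ = 1 then (0 : K) else (p : K))
  refine Filter.eventuallyEq_of_mem (Metric.ball_mem_nhds t one_pos) (fun s hs => ?_)
  have hdist : ‖s - t‖ < 1 := by rw [← dist_eq_norm]; rwa [Metric.mem_ball] at hs
  have : ‖s‖ = 1 ↔ ‖t‖ = 1 := by
    constructor <;> intro h
    · by_contra ht
      have ht' : ‖t‖ < 1 := lt_of_le_of_ne (PadicInt.norm_le_one t) ht
      have hlt : ‖s‖ < 1 := by
        calc ‖s‖ = ‖(s - t) + t‖ := by ring_nf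
        _ ≤ max ‖s - t‖ ‖t‖ := PadicInt.nonarchimedean _ _
        _ < 1 := max_lt hdist ht'
      rw [h] at hlt; linarith
    · by_contra hsn
      have hs' : ‖s‖ < 1 := lt_of_le_of_ne (PadicInt.norm_le_one s) hsn
      have hlt : ‖t‖ < 1 := by
        calc ‖t‖ = ‖(t - s) + s‖ := by ring_nf
        _ ≤ max ‖t - s‖ ‖s‖ := PadicInt.nonarchimedean _ _
        _ < 1 := max_lt (by rwa [← norm_neg, neg_sub] at hdist) hs'
      rw [h] at hlt; linarith
  simp only [this]

section G

set_option linter.unusedSectionVars false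

variable {K : Type*}
  [NontriviallyNormedField K] [NormedAlgebra ℚ_[p] K] [CompleteSpace K]
  (binomC : ℕ → C(ℤ_[p], K)) (hb : ∀ r t, binomC r t = algebraMap ℚ_[p] K (bq r t))

include hb

lemma norm_binomC_le_one (r : ℕ) : ‖binomC r‖ ≤ 1 := by
  rw [ContinuousMap.norm_le _ zero_le_one]
  intro t
  rw [hb, norm_algebraMap']
  exact norm_bq_le_one r t

lemma binomC_nat (r m : ℕ) : binomC r ((m : ℕ) : ℤ_[p]) = ((m.choose r : ℕ) : K) := by
  rw [hb, show (((m : ℤ_[p])) : ℚ_[p]) = ((m : ℚ_[p])) by push_cast; ring, bq_nat, map_natCast]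

lemma summable_coef_smul (a : ℕ → K) (n : ℕ) {c : ℝ} (hc0 : 0 ≤ c) (hc : c < 1)
    (ha : ∀ r, ‖a r‖ ≤ c ^ (r - n)) : Summable (fun r => a r • binomC r) := by
  apply Summable.of_norm_bounded (g := fun r => c ^ (r - n))
  · refine (summable_nat_add_iff n).1 ?_
    simpa using summable_geometric_of_lt_one hc0 hc
  · intro r
    rw [norm_smul]
    calc ‖a r‖ * ‖binomC r‖
        ≤ c ^ (r - n) * 1 := mul_le_mul (ha r) (norm_binomC_le_one binomC hb r)
            (norm_nonneg _) (pow_nonneg hc0 _)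
      _ = c ^ (r - n) := mul_one _

omit hb

lemma eval_tsum {f : ℕ → C(ℤ_[p], K)} (hf : Summable f) (t : ℤ_[p]) :
    (∑' r, f r) t = ∑' r, f r t :=
  (ContinuousMap.evalCLM K t).map_tsum hf

noncomputable def gC (ζ : K) : C(ℤ_[p], K) := ∑' s, ((ζ - 1) ^ s) • binomC s

include hb

lemma summable_g {ζ : K} (hζ : ‖ζ - 1‖ < 1) :
    Summable (fun s => ((ζ - 1) ^ s) • binomC s) :=
  summable_coef_smul binomC hb _ 0 (norm_nonneg _) hζ
    (fun r => by rw [norm_pow]; simp)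

lemma gC_apply {ζ : K} (hζ : ‖ζ - 1‖ < 1) (t : ℤ_[p]) :
    gC binomC ζ t = ∑' s, (ζ - 1) ^ s * binomC s t := by
  rw [gC, eval_tsum (summable_g binomC hb hζ) t]
  exact tsum_congr fun s => by simp [smul_eq_mul]

lemma gC_nat {ζ : K} (hζ : ‖ζ - 1‖ < 1) (m : ℕ) :
    gC binomC ζ ((m : ℕ) : ℤ_[p]) = ζ ^ m := by
  rw [gC_apply binomC hb hζ]
  have hsupp : ∀ s ∉ Finset.range (m + 1), (ζ - 1) ^ s * binomC s ((m : ℕ) : ℤ_[p]) = 0 := by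
    intro s hs
    rw [binomC_nat binomC hb, Nat.choose_eq_zero_of_lt (by simpa using hs)]
    simp
  rw [tsum_eq_sum hsupp]
  have := add_pow (ζ - 1) 1 m
  rw [sub_add_cancel] at this
  rw [this]
  refine Finset.sum_congr rfl fun s hs => ?_
  rw [binomC_nat binomC hb]
  simp [mul_comm]

lemma gC_shift {ζ : K} (hζ : ‖ζ - 1‖ < 1) (n : ℕ) (x : ℤ_[p]) :
    gC binomC ζ (x + (n : ℤ_[p])) = ζ ^ n * gC binomC ζ x := by
  have heq : (fun x : ℤ_[p] => gC binomC ζ (x + (n : ℤ_[p])))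
      = fun x => ζ ^ n * gC binomC ζ x := by
    refine PadicInt.denseRange_natCast.equalizer ?_ ?_ (funext fun m => ?_)
    · exact (gC binomC ζ).continuous.comp (continuous_id.add continuous_const)
    · exact continuous_const.mul (gC binomC ζ).continuous
    · show gC binomC ζ ((m : ℤ_[p]) + (n : ℤ_[p])) = ζ ^ n * gC binomC ζ (m : ℤ_[p])
      rw [show ((m : ℤ_[p]) + (n : ℤ_[p])) = (((m + n : ℕ) : ℕ) : ℤ_[p]) by push_cast; ring,
        gC_nat binomC hb hζ, gC_nat binomC hb hζ, pow_add, mul_comm]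
  exact congrFun heq x

lemma gsum (S : Finset K) (hS : ∀ ζ : K, ζ ∈ S ↔ ζ ^ p = 1) (hcard : S.card = p)
    (hSnorm : ∀ ζ ∈ S, ‖ζ - 1‖ < 1) (t : ℤ_[p]) :
    ∑ ζ ∈ S, gC binomC ζ t = if ‖t‖ = 1 then 0 else (p : K) := by
  have heq : (fun t : ℤ_[p] => ∑ ζ ∈ S, gC binomC ζ t)
      = fun t : ℤ_[p] => if ‖t‖ = 1 then (0 : K) else (p : K) := by
    refine PadicInt.denseRange_natCast.equalizer ?_ (indicator_continuous p) (funext fun m => ?_)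
    · exact continuous_finset_sum S fun ζ _ => (gC binomC ζ).continuous
    · show ∑ ζ ∈ S, gC binomC ζ (m : ℤ_[p]) = if ‖(m : ℤ_[p])‖ = 1 then (0 : K) else (p : K)
      rw [Finset.sum_congr rfl fun ζ hζ => gC_nat binomC hb (hSnorm ζ hζ) m,
        roots_sum S hS hcard m]
      have hisdvd : ‖((m : ℕ) : ℤ_[p])‖ < 1 ↔ p ∣ m := by
        rw [show ((m : ℕ) : ℤ_[p]) = ((m : ℤ) : ℤ_[p]) by push_cast; ring,
          PadicInt.norm_int_lt_one_iff_dvd]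
        exact Int.natCast_dvd_natCast
      by_cases hdvd : p ∣ m
      · rw [if_pos hdvd, if_neg (by rw [← hisdvd] at hdvd; linarith)]
      · rw [if_neg hdvd]
        have h1 : ‖((m : ℕ) : ℤ_[p])‖ = 1 :=
          le_antisymm (PadicInt.norm_le_one _)
            (not_lt.1 fun hlt => hdvd (hisdvd.1 hlt))
        rw [if_pos h1]
  exact congrFun heq t

lemma coef_norm_le {ζ : K} (hζp : ζ ^ p = 1) (n r : ℕ) :
    ‖(r.choose n : K) * ζ ^ n * (ζ - 1) ^ (r - n)‖ ≤ ‖ζ - 1‖ ^ (r - n) := by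
  have h1 : ‖(r.choose n : K)‖ ≤ 1 := norm_natCast_le_one_K p _
  have h2 : ‖ζ ^ n‖ ≤ 1 := by
    rw [norm_pow, norm_zeta_eq_one hζp, one_pow]
  calc ‖(r.choose n : K) * ζ ^ n * (ζ - 1) ^ (r - n)‖
      = ‖(r.choose n : K)‖ * ‖ζ ^ n‖ * ‖(ζ - 1) ^ (r - n)‖ := by rw [norm_mul, norm_mul]
    _ ≤ 1 * 1 * ‖(ζ - 1) ^ (r - n)‖ :=
        mul_le_mul (mul_le_mul h1 h2 (norm_nonneg _) zero_le_one) le_rfl (norm_nonneg _)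
          (by norm_num)
    _ = ‖ζ - 1‖ ^ (r - n) := by rw [one_mul, one_mul, norm_pow]

lemma summable_Gf {ζ : K} (hζp : ζ ^ p = 1) (hζ1 : ‖ζ - 1‖ < 1) (n : ℕ) :
    Summable (fun r => ((r.choose n : K) * ζ ^ n * (ζ - 1) ^ (r - n)) • binomC r) :=
  summable_coef_smul binomC hb _ n (norm_nonneg _) hζ1 (coef_norm_le binomC hb hζp n)

lemma summable_GfK {ζ : K} (hζp : ζ ^ p = 1) (hζ1 : ‖ζ - 1‖ < 1) (n : ℕ) (t : ℤ_[p]) :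
    Summable (fun r => ((r.choose n : K) * ζ ^ n * (ζ - 1) ^ (r - n)) * binomC r t) := by
  apply Summable.of_norm_bounded (g := fun r => ‖ζ - 1‖ ^ (r - n))
  · refine (summable_nat_add_iff n).1 ?_
    simpa using summable_geometric_of_lt_one (norm_nonneg _) hζ1
  · intro r
    rw [norm_mul]
    calc ‖(r.choose n : K) * ζ ^ n * (ζ - 1) ^ (r - n)‖ * ‖binomC r t‖
        ≤ ‖ζ - 1‖ ^ (r - n) * 1 := by
          gcongr
          · exact coef_norm_le binomC hb hζp n r
          · exact (ContinuousMap.norm_coe_le_norm _ t).trans (norm_binomC_le_one binomC hb r)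
      _ = ‖ζ - 1‖ ^ (r - n) := mul_one _

lemma HH {ζ : K} (hζp : ζ ^ p = 1) (hζ1 : ‖ζ - 1‖ < 1) (n : ℕ) (t : ℤ_[p]) :
    (∑' r, ((r.choose n : K) * ζ ^ n * (ζ - 1) ^ (r - n)) • binomC r) t
      = ζ ^ n * binomC n t * gC binomC ζ (t - (n : ℤ_[p])) := by
  rw [eval_tsum (summable_Gf binomC hb hζp hζ1 n) t]
  have hsum : ∑' r, (((r.choose n : K) * ζ ^ n * (ζ - 1) ^ (r - n)) • binomC r) t
      = ∑' r, ((r.choose n : K) * ζ ^ n * (ζ - 1) ^ (r - n)) * binomC r t :=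
    tsum_congr fun r => by simp [smul_eq_mul]
  rw [hsum, ← Summable.sum_add_tsum_nat_add n (summable_GfK binomC hb hζp hζ1 n t)]
  have hzero : ∀ i ∈ Finset.range n,
      ((i.choose n : K) * ζ ^ n * (ζ - 1) ^ (i - n)) * binomC i t = 0 := by
    intro i hi
    rw [Nat.choose_eq_zero_of_lt (Finset.mem_range.1 hi)]
    simp
  rw [Finset.sum_eq_zero hzero, zero_add]
  have hterm : ∀ s : ℕ, (((s + n).choose n : K) * ζ ^ n * (ζ - 1) ^ (s + n - n)) * binomC (s + n) t
      = (ζ ^ n * binomC n t) * ((ζ - 1) ^ s * binomC s (t - (n : ℤ_[p]))) := by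
    intro s
    have hkey : binomC (s + n) t * ((s + n).choose n : K)
        = binomC n t * binomC s (t - (n : ℤ_[p])) := by
      have hcast : (((s + n).choose n : ℕ) : K)
          = algebraMap ℚ_[p] K (((s + n).choose n : ℕ) : ℚ_[p]) := by
        rw [map_natCast]
      have hx : (((t - (n : ℤ_[p])) : ℤ_[p]) : ℚ_[p]) = (t : ℚ_[p]) - (n : ℚ_[p]) := by
        push_cast; ring
      rw [hb, hb, hb, hcast, ← map_mul, ← map_mul, hx]
      congr 1
      rw [show s + n = n + s from Nat.add_comm s n]
      exact bq_identity n s (t : ℚ_[p])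
    calc (((s + n).choose n : K) * ζ ^ n * (ζ - 1) ^ (s + n - n)) * binomC (s + n) t
        = (ζ ^ n * (ζ - 1) ^ s) * (binomC (s + n) t * ((s + n).choose n : K)) := by
          rw [Nat.add_sub_cancel]; ring
      _ = (ζ ^ n * (ζ - 1) ^ s) * (binomC n t * binomC s (t - (n : ℤ_[p]))) := by rw [hkey]
      _ = (ζ ^ n * binomC n t) * ((ζ - 1) ^ s * binomC s (t - (n : ℤ_[p]))) := by ring
  rw [tsum_congr hterm, tsum_mul_left, gC_apply binomC hb hζ1]

end G

end RUPS

/-- Let `μ` be a `K`-valued measure on `ℤ_p` (a continuous linear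
functional on `C(ℤ_p, K)`), with Mahler coefficients `a_r = ∫ binom(t,r) dμ(t)`, so its
associated power series is `F(T) = ∑_r a_r T^r`.  Then the restriction `μ^×` of `μ` to
`ℤ_p^×` (extending functions by zero on `pℤ_p`) has associated power series
`F^×(T) = F(T) - (1/p)·∑_{ζ ∈ μ_p} F(ζT + ζ - 1)`; coefficientwise, for every `n`,
`∫_{ℤ_p^×} binom(t,n) dμ = a_n - (1/p)·∑_{ζ^p=1} ∑_r a_r·C(r,n)·ζ^n·(ζ-1)^{r-n}`. -/
theorem restriction_to_units_power_series
    (p : ℕ) [Fact p.Prime] (K : Type*)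
    [NontriviallyNormedField K] [NormedAlgebra ℚ_[p] K] [CompleteSpace K]
    (μ : C(ℤ_[p], K) →L[K] K)
    (binomC : ℕ → C(ℤ_[p], K))
    (hbinom : ∀ (r : ℕ) (t : ℤ_[p]), binomC r t =
      algebraMap ℚ_[p] K ((r.factorial : ℚ_[p])⁻¹ * (descPochhammer ℚ_[p] r).eval (t : ℚ_[p])))
    (binomStar : ℕ → C(ℤ_[p], K))
    (hstar : ∀ (r : ℕ) (t : ℤ_[p]), binomStar r t = if ‖t‖ = 1 then binomC r t else 0)
    (S : Finset K) (hS : ∀ ζ : K, ζ ∈ S ↔ ζ ^ p = 1) (hcard : S.card = p)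
    (hSnorm : ∀ ζ ∈ S, ‖ζ - 1‖ < 1) :
    ∀ n : ℕ, μ (binomStar n) = μ (binomC n) -
      (p : K)⁻¹ * ∑ ζ ∈ S, ∑' r : ℕ,
        μ (binomC r) * (r.choose n : K) * ζ ^ n * (ζ - 1) ^ (r - n) := by
  intro n
  have hb : ∀ (r : ℕ) (t : ℤ_[p]), binomC r t = algebraMap ℚ_[p] K (RUPS.bq r (t : ℚ_[p])) :=
    hbinom
  have hpK : (p : K) ≠ 0 := by
    have : ‖(p : K)‖ ≠ 0 := by
      rw [show ((p : ℕ) : K) = algebraMap ℚ_[p] K ((p : ℕ) : ℚ_[p]) by rw [map_natCast],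
        norm_algebraMap']
      simp [Nat.cast_ne_zero, (Fact.out : p.Prime).ne_zero]
    simpa using fun h => this (by rw [h, norm_zero])
  -- the twisted series as a continuous map
  set Gf : K → C(ℤ_[p], K) := fun ζ =>
    ∑' r, ((r.choose n : K) * ζ ^ n * (ζ - 1) ^ (r - n)) • binomC r with hGf
  -- functional equation in C(ℤ_[p], K)
  have hfun : binomStar n = binomC n - (p : K)⁻¹ • ∑ ζ ∈ S, Gf ζ := by
    ext t
    rw [hstar]
    simp only [ContinuousMap.sub_apply, ContinuousMap.smul_apply, ContinuousMap.sum_apply,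
      smul_eq_mul]
    have hGfval : ∀ ζ ∈ S, Gf ζ t = binomC n t * RUPS.gC binomC ζ t := by
      intro ζ hζ
      have h1 := RUPS.HH binomC hb ((hS ζ).1 hζ) (hSnorm ζ hζ) n t
      have h2 := RUPS.gC_shift binomC hb (hSnorm ζ hζ) n (t - (n : ℤ_[p]))
      rw [sub_add_cancel] at h2
      rw [hGf, h1, h2]
      ring
    rw [Finset.sum_congr rfl hGfval, ← Finset.mul_sum,
      RUPS.gsum binomC hb S hS hcard hSnorm t]
    by_cases h1 : ‖t‖ = 1
    · rw [if_pos h1, if_pos h1]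
      ring
    · rw [if_neg h1, if_neg h1]
      field_simp
      ring
  rw [hfun, map_sub, map_smul, map_sum, smul_eq_mul]
  congr 2
  refine Finset.sum_congr rfl fun ζ hζ => ?_
  have hsum := μ.map_tsum (RUPS.summable_Gf binomC hb ((hS ζ).1 hζ) (hSnorm ζ hζ) n)
  rw [hGf, hsum]
  exact tsum_congr fun r => by rw [map_smul, smul_eq_mul]; ring
end

section
/- Let φ^{(l,m)}(z₁,z₂) = (z₁z̄₁)^l · z₂^{2m} · e^{-2π(z₁z̄₁ + z₂z̄₂)} for nonnegative integers l, m, a Schwartz function on C². Let X' be the second-order differential operator X' = z₂²·∂²/∂z₁∂z̄₁ + z̄₁z₂·∂²/∂z̄₁∂z̄₂ + z₁z₂·∂²/∂z₁∂z̄₂ + z₁z̄₁·∂²/∂z̄₂² + z₂·∂/∂z̄₂. Then X'φ^{(l,m)} = l²·φ^{(l-1,m+1)} - 4π(2l+1)·φ^{(l,m+1)} + (4π)²·φ^{(l+1,m+1)}. -/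
open Complex

/-- The Wirtinger derivative `∂f/∂z = (1/2)(∂f/∂x - i ∂f/∂y)` of `f : ℂ → ℂ`
(real Fréchet derivative evaluated on `1` and `i`). -/
noncomputable def wirtingerDz (f : ℂ → ℂ) (z : ℂ) : ℂ :=
  (1 / 2 : ℂ) * (fderiv ℝ f z 1 - Complex.I * fderiv ℝ f z Complex.I)

/-- The conjugate Wirtinger derivative `∂f/∂z̄ = (1/2)(∂f/∂x + i ∂f/∂y)`. -/
noncomputable def wirtingerDzbar (f : ℂ → ℂ) (z : ℂ) : ℂ :=
  (1 / 2 : ℂ) * (fderiv ℝ f z 1 + Complex.I * fderiv ℝ f z Complex.I)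

/-- `∂/∂z₁` for functions of two complex variables. -/
noncomputable def D1 (f : ℂ → ℂ → ℂ) : ℂ → ℂ → ℂ :=
  fun z₁ z₂ => wirtingerDz (fun w => f w z₂) z₁

/-- `∂/∂z̄₁` for functions of two complex variables. -/
noncomputable def D1bar (f : ℂ → ℂ → ℂ) : ℂ → ℂ → ℂ :=
  fun z₁ z₂ => wirtingerDzbar (fun w => f w z₂) z₁

/-- `∂/∂z̄₂` for functions of two complex variables. -/
noncomputable def D2bar (f : ℂ → ℂ → ℂ) : ℂ → ℂ → ℂ :=
  fun z₁ z₂ => wirtingerDzbar (fun w => f z₁ w) z₂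

/-- The Schwartz function `φ^{(l,m)}(z₁,z₂) = (z₁z̄₁)^l z₂^{2m} e^{-2π(z₁z̄₁ + z₂z̄₂)}`. -/
noncomputable def phiLM (l m : ℕ) : ℂ → ℂ → ℂ := fun z₁ z₂ =>
  (z₁ * (starRingEnd ℂ) z₁) ^ l * z₂ ^ (2 * m) *
    Complex.exp (-(2 * (Real.pi : ℂ)) *
      (z₁ * (starRingEnd ℂ) z₁ + z₂ * (starRingEnd ℂ) z₂))

/-- The second-order differential operator
`X' = z₂²·∂²/∂z₁∂z̄₁ + z̄₁z₂·∂²/∂z̄₁∂z̄₂ + z₁z₂·∂²/∂z₁∂z̄₂ + z₁z̄₁·∂²/∂z̄₂² + z₂·∂/∂z̄₂`. -/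
noncomputable def Xprime (f : ℂ → ℂ → ℂ) : ℂ → ℂ → ℂ := fun z₁ z₂ =>
  z₂ ^ 2 * D1 (D1bar f) z₁ z₂ +
  (starRingEnd ℂ) z₁ * z₂ * D1bar (D2bar f) z₁ z₂ +
  z₁ * z₂ * D1 (D2bar f) z₁ z₂ +
  z₁ * (starRingEnd ℂ) z₁ * D2bar (D2bar f) z₁ z₂ +
  z₂ * D2bar f z₁ z₂

open ComplexConjugate

noncomputable def Kc : ℂ →L[ℝ] ℂ := Complex.conjCLE.toContinuousLinearMap
noncomputable def Ic : ℂ →L[ℝ] ℂ := ContinuousLinearMap.id ℝ ℂ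
lemma Kc_apply (v : ℂ) : Kc v = conj v := rfl
lemma Ic_apply (v : ℂ) : Ic v = v := rfl

/-- the constant `-2π`. -/
noncomputable def MoC : ℂ := -(2 * (Real.pi : ℂ))

/-- monomial times Gaussian -/
noncomputable def Mo (a b c d : ℕ) : ℂ → ℂ → ℂ := fun z₁ z₂ =>
  z₁ ^ a * (conj z₁) ^ b * z₂ ^ c * (conj z₂) ^ d *
    Complex.exp (MoC * (z₁ * conj z₁ + z₂ * conj z₂))

lemma exp_split (w v : ℂ) :
    Complex.exp (MoC * (w * conj w + v * conj v)) =
      Complex.exp (MoC * (w * conj w)) * Complex.exp (MoC * (v * conj v)) := by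
  rw [← Complex.exp_add]; ring_nf

lemma hasF_mono (C α : ℂ) (n k : ℕ) (z : ℂ) :
    HasFDerivAt (fun w : ℂ => C * (w ^ n * (conj w) ^ k * Complex.exp (α * (w * conj w))))
      ((C * (((n : ℂ) * z ^ (n - 1) * (conj z) ^ k
            + α * z ^ n * (conj z) ^ (k + 1)) * Complex.exp (α * (z * conj z)))) • Ic
       + (C * (((k : ℂ) * z ^ n * (conj z) ^ (k - 1)
            + α * z ^ (n + 1) * (conj z) ^ k) * Complex.exp (α * (z * conj z)))) • Kc) z := by
  have hconj : HasFDerivAt (fun w : ℂ => conj w) Kc z := Kc.hasFDerivAt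
  have hid : HasFDerivAt (fun w : ℂ => w) Ic z := Ic.hasFDerivAt
  have hpow : HasFDerivAt (fun w : ℂ => w ^ n)
      (((1 : ℂ →L[ℂ] ℂ).smulRight ((n : ℂ) * z ^ (n - 1))).restrictScalars ℝ) z :=
    ((hasDerivAt_pow n z).hasFDerivAt).restrictScalars ℝ
  have hkpow : HasFDerivAt (fun w : ℂ => w ^ k)
      (((1 : ℂ →L[ℂ] ℂ).smulRight ((k : ℂ) * (conj z) ^ (k - 1))).restrictScalars ℝ) (conj z) :=
    ((hasDerivAt_pow k (conj z)).hasFDerivAt).restrictScalars ℝ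
  have hconjpow : HasFDerivAt (fun w : ℂ => (conj w) ^ k)
      ((((1 : ℂ →L[ℂ] ℂ).smulRight ((k : ℂ) * (conj z) ^ (k - 1))).restrictScalars ℝ).comp Kc) z :=
    hkpow.comp z hconj
  have hq : HasFDerivAt (fun w : ℂ => α * (w * conj w))
      (α • (z • Kc + conj z • Ic)) z := ((hid.mul hconj).const_mul α)
  have hexp : HasFDerivAt (fun w : ℂ => Complex.exp (α * (w * conj w)))
      (Complex.exp (α * (z * conj z)) • (α • (z • Kc + conj z • Ic))) z := hq.cexp
  have h : HasFDerivAt (fun w : ℂ => C * (w ^ n * (conj w) ^ k * Complex.exp (α * (w * conj w))))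
      _ z := (((hpow.mul hconjpow).mul hexp).const_mul C)
  refine h.congr_fderiv ?_
  ext v
  simp only [Kc_apply, Ic_apply, ContinuousLinearMap.add_apply, ContinuousLinearMap.smul_apply,
    ContinuousLinearMap.coe_comp', Function.comp_apply, Pi.mul_apply, ContinuousLinearMap.coe_restrictScalars',
    ContinuousLinearMap.smulRight_apply, ContinuousLinearMap.one_apply,
    ContinuousLinearMap.id_apply, smul_eq_mul, pow_succ]
  ring

lemma wz_of {f : ℂ → ℂ} {A B : ℂ} {z : ℂ} (h : HasFDerivAt f (A • Ic + B • Kc) z) :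
    wirtingerDz f z = A := by
  rw [wirtingerDz, h.fderiv]
  simp only [ContinuousLinearMap.add_apply, ContinuousLinearMap.smul_apply]
  show (1/2 : ℂ) * (A • (1:ℂ) + B • conj (1:ℂ) - I * (A • I + B • conj I)) = A
  simp only [smul_eq_mul, map_one, Complex.conj_I]
  ring_nf
  simp [Complex.I_sq]
  ring

lemma wzbar_of {f : ℂ → ℂ} {A B : ℂ} {z : ℂ} (h : HasFDerivAt f (A • Ic + B • Kc) z) :
    wirtingerDzbar f z = B := by
  rw [wirtingerDzbar, h.fderiv]
  simp only [ContinuousLinearMap.add_apply, ContinuousLinearMap.smul_apply]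
  show (1/2 : ℂ) * (A • (1:ℂ) + B • conj (1:ℂ) + I * (A • I + B • conj I)) = B
  simp only [smul_eq_mul, map_one, Complex.conj_I]
  ring_nf
  simp [Complex.I_sq]
  ring

lemma hasF_comb {f g : ℂ → ℂ} {A1 B1 A2 B2 : ℂ} (p q : ℂ) {z : ℂ}
    (h1 : HasFDerivAt f (A1 • Ic + B1 • Kc) z) (h2 : HasFDerivAt g (A2 • Ic + B2 • Kc) z) :
    HasFDerivAt (fun w => p * f w + q * g w)
      ((p * A1 + q * A2) • Ic + (p * B1 + q * B2) • Kc) z := by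
  have h : HasFDerivAt (fun w => p * f w + q * g w) _ z := (h1.const_mul p).add (h2.const_mul q)
  refine h.congr_fderiv ?_
  ext v
  simp only [Kc_apply, Ic_apply, ContinuousLinearMap.add_apply, ContinuousLinearMap.smul_apply,
    smul_eq_mul]
  ring

lemma hasF_Mo1 (a b c d : ℕ) (z₁ z₂ : ℂ) :
    HasFDerivAt (fun w => Mo a b c d w z₂)
      (((a : ℂ) * Mo (a-1) b c d z₁ z₂ + MoC * Mo a (b+1) c d z₁ z₂) • Ic +
       ((b : ℂ) * Mo a (b-1) c d z₁ z₂ + MoC * Mo (a+1) b c d z₁ z₂) • Kc) z₁ := by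
  set C : ℂ := z₂ ^ c * (conj z₂) ^ d * Complex.exp (MoC * (z₂ * conj z₂)) with hC
  have h := hasF_mono C MoC a b z₁
  have feq : (fun w => Mo a b c d w z₂)
      = (fun w : ℂ => C * (w ^ a * (conj w) ^ b * Complex.exp (MoC * (w * conj w)))) := by
    funext w; simp only [Mo, exp_split, hC]; ring
  have hA : (a : ℂ) * Mo (a-1) b c d z₁ z₂ + MoC * Mo a (b+1) c d z₁ z₂
      = C * (((a : ℂ) * z₁ ^ (a - 1) * (conj z₁) ^ b
          + MoC * z₁ ^ a * (conj z₁) ^ (b + 1)) * Complex.exp (MoC * (z₁ * conj z₁))) := by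
    simp only [Mo, exp_split, hC]; ring
  have hB : (b : ℂ) * Mo a (b-1) c d z₁ z₂ + MoC * Mo (a+1) b c d z₁ z₂
      = C * (((b : ℂ) * z₁ ^ a * (conj z₁) ^ (b - 1)
          + MoC * z₁ ^ (a + 1) * (conj z₁) ^ b) * Complex.exp (MoC * (z₁ * conj z₁))) := by
    simp only [Mo, exp_split, hC]; ring
  rw [feq, hA, hB]; exact h

lemma hasF_Mo2 (a b c d : ℕ) (z₁ z₂ : ℂ) :
    HasFDerivAt (fun w => Mo a b c d z₁ w)
      (((c : ℂ) * Mo a b (c-1) d z₁ z₂ + MoC * Mo a b c (d+1) z₁ z₂) • Ic +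
       ((d : ℂ) * Mo a b c (d-1) z₁ z₂ + MoC * Mo a b (c+1) d z₁ z₂) • Kc) z₂ := by
  set C : ℂ := z₁ ^ a * (conj z₁) ^ b * Complex.exp (MoC * (z₁ * conj z₁)) with hC
  have h := hasF_mono C MoC c d z₂
  have feq : (fun w => Mo a b c d z₁ w)
      = (fun w : ℂ => C * (w ^ c * (conj w) ^ d * Complex.exp (MoC * (w * conj w)))) := by
    funext w; simp only [Mo, exp_split, hC]; ring
  have hA : (c : ℂ) * Mo a b (c-1) d z₁ z₂ + MoC * Mo a b c (d+1) z₁ z₂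
      = C * (((c : ℂ) * z₂ ^ (c - 1) * (conj z₂) ^ d
          + MoC * z₂ ^ c * (conj z₂) ^ (d + 1)) * Complex.exp (MoC * (z₂ * conj z₂))) := by
    simp only [Mo, exp_split, hC]; ring
  have hB : (d : ℂ) * Mo a b c (d-1) z₁ z₂ + MoC * Mo a b (c+1) d z₁ z₂
      = C * (((d : ℂ) * z₂ ^ c * (conj z₂) ^ (d - 1)
          + MoC * z₂ ^ (c + 1) * (conj z₂) ^ d) * Complex.exp (MoC * (z₂ * conj z₂))) := by
    simp only [Mo, exp_split, hC]; ring
  rw [feq, hA, hB]; exact h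

lemma D1_Mo2 (p q : ℂ) (a1 b1 c1 d1 a2 b2 c2 d2 : ℕ) (z₁ z₂ : ℂ) :
    D1 (fun w₁ w₂ => p * Mo a1 b1 c1 d1 w₁ w₂ + q * Mo a2 b2 c2 d2 w₁ w₂) z₁ z₂
    = p * ((a1 : ℂ) * Mo (a1-1) b1 c1 d1 z₁ z₂ + MoC * Mo a1 (b1+1) c1 d1 z₁ z₂)
      + q * ((a2 : ℂ) * Mo (a2-1) b2 c2 d2 z₁ z₂ + MoC * Mo a2 (b2+1) c2 d2 z₁ z₂) :=
  wz_of (hasF_comb p q (hasF_Mo1 a1 b1 c1 d1 z₁ z₂) (hasF_Mo1 a2 b2 c2 d2 z₁ z₂))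

lemma D1bar_Mo2 (p q : ℂ) (a1 b1 c1 d1 a2 b2 c2 d2 : ℕ) (z₁ z₂ : ℂ) :
    D1bar (fun w₁ w₂ => p * Mo a1 b1 c1 d1 w₁ w₂ + q * Mo a2 b2 c2 d2 w₁ w₂) z₁ z₂
    = p * ((b1 : ℂ) * Mo a1 (b1-1) c1 d1 z₁ z₂ + MoC * Mo (a1+1) b1 c1 d1 z₁ z₂)
      + q * ((b2 : ℂ) * Mo a2 (b2-1) c2 d2 z₁ z₂ + MoC * Mo (a2+1) b2 c2 d2 z₁ z₂) :=
  wzbar_of (hasF_comb p q (hasF_Mo1 a1 b1 c1 d1 z₁ z₂) (hasF_Mo1 a2 b2 c2 d2 z₁ z₂))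

lemma D2bar_Mo2 (p q : ℂ) (a1 b1 c1 d1 a2 b2 c2 d2 : ℕ) (z₁ z₂ : ℂ) :
    D2bar (fun w₁ w₂ => p * Mo a1 b1 c1 d1 w₁ w₂ + q * Mo a2 b2 c2 d2 w₁ w₂) z₁ z₂
    = p * ((d1 : ℂ) * Mo a1 b1 c1 (d1-1) z₁ z₂ + MoC * Mo a1 b1 (c1+1) d1 z₁ z₂)
      + q * ((d2 : ℂ) * Mo a2 b2 c2 (d2-1) z₁ z₂ + MoC * Mo a2 b2 (c2+1) d2 z₁ z₂) :=
  wzbar_of (hasF_comb p q (hasF_Mo2 a1 b1 c1 d1 z₁ z₂) (hasF_Mo2 a2 b2 c2 d2 z₁ z₂))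

/-- `X'φ^{(l,m)} = l²·φ^{(l-1,m+1)} - 4π(2l+1)·φ^{(l,m+1)} +
(4π)²·φ^{(l+1,m+1)}` (for `l = 0` the first term has coefficient `l² = 0`). -/
theorem Xprime_phiLM (l m : ℕ) (z₁ z₂ : ℂ) :
    Xprime (phiLM l m) z₁ z₂ =
      (l : ℂ) ^ 2 * phiLM (l - 1) (m + 1) z₁ z₂ -
        4 * (Real.pi : ℂ) * (2 * l + 1) * phiLM l (m + 1) z₁ z₂ +
        (4 * (Real.pi : ℂ)) ^ 2 * phiLM (l + 1) (m + 1) z₁ z₂ := by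
  have hphi : phiLM l m = fun w₁ w₂ =>
      (1 : ℂ) * Mo l l (2*m) 0 w₁ w₂ + 0 * Mo 0 0 0 0 w₁ w₂ := by
    funext w₁ w₂; simp only [phiLM, Mo, MoC, mul_pow]; ring
  have e1 : D1bar (phiLM l m) = fun w₁ w₂ =>
      (l : ℂ) * Mo l (l-1) (2*m) 0 w₁ w₂ + MoC * Mo (l+1) l (2*m) 0 w₁ w₂ := by
    funext w₁ w₂; rw [hphi, D1bar_Mo2]; push_cast; ring
  have e2 : D2bar (phiLM l m) = fun w₁ w₂ =>
      MoC * Mo l l (2*m+1) 0 w₁ w₂ + 0 * Mo 0 0 0 0 w₁ w₂ := by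
    funext w₁ w₂; rw [hphi, D2bar_Mo2]; push_cast; ring
  simp only [Xprime, e1, e2, D1_Mo2, D1bar_Mo2, D2bar_Mo2]
  cases l with
  | zero =>
    simp only [phiLM, Mo, MoC, mul_pow]
    push_cast
    ring
  | succ n =>
    simp only [phiLM, Mo, MoC, mul_pow, Nat.succ_sub_one]
    push_cast
    ring
end
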